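/- The order-3 braided antisymmetriser A⁽³⁾ := (id − σ₂) ∘ (id − σ₁ + σ₁∘σ₂) on V⊗V⊗V satisfies A⁽³⁾ ∘ A⁽³⁾ = (1 + 2q² + 2q⁴ + q⁶) · A⁽³⁾; in particular A⁽³⁾ acts as multiplication by λ₃ = 1+2q²+2q⁴+q⁶ on its range. -/

import Mathlib

open TensorProduct

noncomputable section

/-- The 3-dimensional complex vector space with basis `ω 0 = ω₋`, `ω 1 = ω₊`, `ω 2 = ω_z`. -/
abbrev V : Type := Fin 3 → ℂ

/-- The distinguished basis `(ω₋, ω₊, ω_z)` of `V`. -/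
def ω : Fin 3 → V := fun i => Pi.basisFun ℂ (Fin 3) i

/-- The basis `ω_a ⊗ ω_b` of `V ⊗ V`. -/
def basisVV : Module.Basis (Fin 3 × Fin 3) ℂ (V ⊗[ℂ] V) :=
  (Pi.basisFun ℂ (Fin 3)).tensorProduct (Pi.basisFun ℂ (Fin 3))

/-- The values of the braiding `σ` on the basis vectors `ω_a ⊗ ω_b`
(first index `0 = −`, `1 = +`, `2 = z`). -/
def σval (q : ℝ) : Fin 3 → Fin 3 → V ⊗[ℂ] V :=
  ![![ω 0 ⊗ₜ[ℂ] ω 0,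
     (1 - (q : ℂ) ^ 2) • (ω 0 ⊗ₜ[ℂ] ω 1) + ((q : ℂ) ^ 2)⁻¹ • (ω 1 ⊗ₜ[ℂ] ω 0),
     (1 - (q : ℂ) ^ 2) • (ω 0 ⊗ₜ[ℂ] ω 2) + ((q : ℂ) ^ 4)⁻¹ • (ω 2 ⊗ₜ[ℂ] ω 0)],
    ![(q : ℂ) ^ 4 • (ω 0 ⊗ₜ[ℂ] ω 1),
      ω 1 ⊗ₜ[ℂ] ω 1,
      (q : ℂ) ^ 6 • (ω 2 ⊗ₜ[ℂ] ω 1)],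
    ![(q : ℂ) ^ 6 • (ω 0 ⊗ₜ[ℂ] ω 2),
      (1 - (q : ℂ) ^ 2) • (ω 2 ⊗ₜ[ℂ] ω 1) + ((q : ℂ) ^ 4)⁻¹ • (ω 1 ⊗ₜ[ℂ] ω 2),
      ω 2 ⊗ₜ[ℂ] ω 2]]

/-- The braiding `σ` of Woronowicz's 3d left covariant calculus on `SU_q(2)`. -/
def σmap (q : ℝ) : (V ⊗[ℂ] V) →ₗ[ℂ] (V ⊗[ℂ] V) :=
  basisVV.constr ℂ (fun p => σval q p.1 p.2)

/-- `V ⊗ V ⊗ V`. -/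
abbrev V3 : Type := V ⊗[ℂ] (V ⊗[ℂ] V)

instance : AddCommGroup V3 := inferInstance
instance : Module ℂ V3 := inferInstance

/-- `σ₁ = σ ⊗ id` acting on the first two tensor slots of `V ⊗ V ⊗ V`. -/
def σ₁ (q : ℝ) : V3 →ₗ[ℂ] V3 :=
  (TensorProduct.assoc ℂ V V V).toLinearMap ∘ₗ
    (TensorProduct.map (σmap q) LinearMap.id) ∘ₗ
      (TensorProduct.assoc ℂ V V V).symm.toLinearMap

/-- `σ₂ = id ⊗ σ` acting on the last two tensor slots of `V ⊗ V ⊗ V`. -/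
def σ₂ (q : ℝ) : V3 →ₗ[ℂ] V3 :=
  TensorProduct.map LinearMap.id (σmap q)

/-- The order-3 braided antisymmetriser `A⁽³⁾ = (id − σ₂) ∘ (id − σ₁ + σ₁∘σ₂)`. -/
def A3 (q : ℝ) : V3 →ₗ[ℂ] V3 :=
  ((LinearMap.id : V3 →ₗ[ℂ] V3) - σ₂ q) ∘ₗ
    ((LinearMap.id : V3 →ₗ[ℂ] V3) - σ₁ q + σ₁ q ∘ₗ σ₂ q)

lemma auxpow (x : ℂ) (hx : x ≠ 0) (a b : ℕ) : x ^ a * x⁻¹ ^ b = x ^ (a - b) * x⁻¹ ^ (b - a) := by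
  rcases le_total b a with h | h
  · rw [Nat.sub_eq_zero_of_le h, pow_zero, mul_one]
    rw [show a = (a - b) + b by omega, pow_add, Nat.add_sub_cancel, mul_assoc, inv_pow,
      mul_inv_cancel₀ (pow_ne_zero _ hx), mul_one]
  · rw [Nat.sub_eq_zero_of_le h, pow_zero, one_mul]
    rw [show b = a + (b - a) by omega, pow_add, Nat.add_sub_cancel_left, inv_pow,
      ← mul_assoc, mul_inv_cancel₀ (pow_ne_zero _ hx), one_mul]

lemma fin_mk_two (h : 2 < 3) : (⟨2, h⟩ : Fin 3) = 2 := rfl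

lemma auxpow' (x : ℂ) (hx : x ≠ 0) (a b : ℕ) :
    x ^ a * (x ^ b)⁻¹ = x ^ (a - b) * (x ^ (b - a))⁻¹ := by
  rw [← inv_pow, ← inv_pow, auxpow x hx]

lemma σmap_apply (q : ℝ) (i j : Fin 3) : σmap q (ω i ⊗ₜ[ℂ] ω j) = σval q i j := by
  have h : ω i ⊗ₜ[ℂ] ω j = basisVV (i, j) := by
    simp [basisVV, Module.Basis.tensorProduct_apply, ω]
  rw [h, σmap, Module.Basis.constr_basis]

set_option maxHeartbeats 4000000 in
lemma A3_comp (q : ℝ) (hq : (q:ℂ) ≠ 0) :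
    A3 q ∘ₗ A3 q = (1 + 2 * (q : ℂ) ^ 2 + 2 * (q : ℂ) ^ 4 + (q : ℂ) ^ 6) • A3 q := by
  apply ((Pi.basisFun ℂ (Fin 3)).tensorProduct basisVV).ext
  rintro ⟨i, j, k⟩
  have hb : ((Pi.basisFun ℂ (Fin 3)).tensorProduct basisVV) (i, (j, k))
      = ω i ⊗ₜ[ℂ] (ω j ⊗ₜ[ℂ] ω k) := by
    simp [basisVV, Module.Basis.tensorProduct_apply, ω]
  rw [hb]
  fin_cases i <;> fin_cases j <;> fin_cases k <;>
  · simp only [A3, σ₁, σ₂, Fin.isValue, Fin.zero_eta, Fin.mk_one, Fin.reduceFinMk,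
      LinearMap.comp_apply, LinearMap.add_apply, LinearMap.sub_apply,
      LinearMap.smul_apply, LinearMap.id_apply, LinearEquiv.coe_coe, map_add, map_sub, map_smul,
      TensorProduct.assoc_tmul, TensorProduct.assoc_symm_tmul, TensorProduct.map_tmul,
      σmap_apply, σval, Matrix.cons_val_zero, Matrix.cons_val_one, Matrix.head_cons,
      Matrix.cons_val_two, Matrix.tail_cons,
      TensorProduct.add_tmul, TensorProduct.tmul_add, ← TensorProduct.smul_tmul',
      TensorProduct.tmul_smul, smul_add, smul_smul]
    match_scalars <;>
    · try ring_nf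
      try simp only [inv_pow]
      try simp only [auxpow' _ hq, Nat.reduceSub, pow_zero, mul_one, one_mul, inv_one]
      try norm_num
      try ring1

/-- `A⁽³⁾ ∘ A⁽³⁾ = (1+2q²+2q⁴+q⁶) · A⁽³⁾`; in particular `A⁽³⁾` acts as
multiplication by `λ₃ = 1+2q²+2q⁴+q⁶` on its range. -/
theorem A3_squared (q : ℝ) (hq0 : 0 < q) (hq1 : q < 1) :
    A3 q ∘ₗ A3 q = (1 + 2 * (q : ℂ) ^ 2 + 2 * (q : ℂ) ^ 4 + (q : ℂ) ^ 6) • A3 q ∧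
      ∀ x ∈ LinearMap.range (A3 q),
        A3 q x = (1 + 2 * (q : ℂ) ^ 2 + 2 * (q : ℂ) ^ 4 + (q : ℂ) ^ 6) • x := by
  have hq : (q : ℂ) ≠ 0 := Complex.ofReal_ne_zero.mpr (ne_of_gt hq0)
  have h := A3_comp q hq
  refine ⟨h, ?_⟩
  rintro x ⟨y, rfl⟩
  calc A3 q (A3 q y) = (A3 q ∘ₗ A3 q) y := rfl
    _ = (1 + 2 * (q : ℂ) ^ 2 + 2 * (q : ℂ) ^ 4 + (q : ℂ) ^ 6) • A3 q y := by rw [h]; rfl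


end
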